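/- Let l_1 be a based loop of duration t whose periodic extension is continuous at time r ∈ [0,t), and let l_2^o be the equivalence class (loop) of a based loop l_2. Then inf{ D(l_1, l) : l ∈ l_2^o } = inf{ D(Θ_r l_1, l) : l ∈ l_2^o }; i.e., the distance to a loop class is invariant under circular translation at a continuity point. -/

import Mathlib

open Filter Topology MeasureTheory Set

variable {S : Type*} [MetricSpace S]

/-- A based loop, represented by its periodic extension to all of `ℝ`:
a càdlàg function `f : ℝ → S` of period `len > 0`. -/
structure BasedLoop (S : Type*) [MetricSpace S] where
  f : ℝ → S
  len : ℝ
  len_pos : 0 < len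
  periodic : ∀ u, f (u + len) = f u
  rightCont : ∀ u, Tendsto f (𝓝[>] u) (𝓝 (f u))
  leftLim : ∀ u, ∃ y, Tendsto f (𝓝[<] u) (𝓝 y)

/-- `lam` is an increasing bijection of `[0,1]` onto itself. -/
def IncBij (lam : ℝ → ℝ) : Prop :=
  StrictMonoOn lam (Icc 0 1) ∧ BijOn lam (Icc 0 1) (Icc 0 1) ∧ lam 0 = 0 ∧ lam 1 = 1

/-- `sup_{s<t} |log ((lam t - lam s)/(t-s))|` over `0 ≤ s < t ≤ 1`. -/
noncomputable def supLog (lam : ℝ → ℝ) : ℝ :=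
  sSup {x | ∃ s t : ℝ, 0 ≤ s ∧ s < t ∧ t ≤ 1 ∧ x = |Real.log ((lam t - lam s) / (t - s))|}

/-- The Skorokhod-type distance on (normalized) paths over `[0,1]`. -/
noncomputable def skorDist (f g : ℝ → S) : ℝ :=
  sInf {x | ∃ lam, IncBij lam ∧
    x = supLog lam + sSup {y | ∃ u ∈ Icc (0:ℝ) 1, y = dist (f (lam u)) (g u)}}

/-- Normalization of a based loop to duration 1. -/
noncomputable def BasedLoop.normalized (l : BasedLoop S) : ℝ → S := fun u => l.f (l.len * u)

/-- The distance `D` on based loops. -/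
noncomputable def loopDist (l1 l2 : BasedLoop S) : ℝ :=
  |l1.len - l2.len| + skorDist l1.normalized l2.normalized

/-- Circular translation `Θ_r` of a based loop. -/
def BasedLoop.shift (l : BasedLoop S) (r : ℝ) : BasedLoop S where
  f := fun u => l.f (u + r)
  len := l.len
  len_pos := l.len_pos
  periodic := fun u => by simpa [add_right_comm] using l.periodic (u + r)
  rightCont := fun u => by
    have h : Tendsto (fun u' : ℝ => u' + r) (𝓝[>] u) (𝓝[>] (u + r)) := by
      apply tendsto_nhdsWithin_of_tendsto_nhds_of_eventually_within
      · exact ((continuous_id.add continuous_const).tendsto u).mono_left nhdsWithin_le_nhds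
      · filter_upwards [self_mem_nhdsWithin] with x hx
        simp only [mem_Ioi] at hx ⊢; linarith
    exact (l.rightCont (u + r)).comp h
  leftLim := fun u => by
    obtain ⟨y, hy⟩ := l.leftLim (u + r)
    refine ⟨y, hy.comp ?_⟩
    apply tendsto_nhdsWithin_of_tendsto_nhds_of_eventually_within
    · exact ((continuous_id.add continuous_const).tendsto u).mono_left nhdsWithin_le_nhds
    · filter_upwards [self_mem_nhdsWithin] with x hx
      simp only [mem_Iio] at hx ⊢; linarith

/-- Equivalence of based loops: identical up to circular translation. -/
def LoopEquiv (l1 l2 : BasedLoop S) : Prop :=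
  l1.len = l2.len ∧ ∃ r : ℝ, ∀ u, l1.f (u + r) = l2.f u

instance loopSetoid (S : Type*) [MetricSpace S] : Setoid (BasedLoop S) where
  r := LoopEquiv
  iseqv := by
    constructor
    · exact fun l => ⟨rfl, 0, fun u => by simp⟩
    · rintro a b ⟨hlen, r, hr⟩
      refine ⟨hlen.symm, -r, fun u => ?_⟩
      have h2 := hr (u - r)
      rw [sub_add_cancel] at h2
      rw [h2]; congr 1
    · rintro a b c ⟨hab, r1, h1⟩ ⟨hbc, r2, h2⟩
      refine ⟨hab.trans hbc, r2 + r1, fun u => ?_⟩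
      have := h1 (u + r2)
      rw [show u + (r2 + r1) = u + r2 + r1 by ring, this, h2]

/-- A loop is an equivalence class of based loops modulo circular translation. -/
def Loop (S : Type*) [MetricSpace S] := Quotient (loopSetoid S)

/-- The distance `Dᵒ` on loops. -/
noncomputable def loopDistO (L1 L2 : Loop S) : ℝ :=
  sInf {x | ∃ l1 l2 : BasedLoop S, ⟦l1⟧ = L1 ∧ ⟦l2⟧ = L2 ∧ x = loopDist l1 l2}

/-- The multi-occupation field `⟨l, f⟩` of a (periodically extended) path `l`
of duration `t`, for `f : Sⁿ → ℝ`. -/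
noncomputable def occField (n : ℕ) (l : ℝ → S) (t : ℝ) (f : (Fin n → S) → ℝ) : ℝ :=
  ∑ j : Fin n,
    ∫ s in {s : Fin n → ℝ | (∀ i, s i ∈ Ioo 0 t) ∧ StrictMono s},
      f (fun i => l (s (i + j)))

/-- The multi-occupation field of a loop, computed from a representative. -/
noncomputable def occFieldLoop (n : ℕ) (L : Loop S) (f : (Fin n → S) → ℝ) : ℝ :=
  occField n (Quotient.out L).f (Quotient.out L).len f

/-- Open sets of the loop space for the metric `Dᵒ`. -/
def IsOpenLoop (A : Set (Loop S)) : Prop :=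
  ∀ L ∈ A, ∃ ε > 0, ∀ L', loopDistO L L' < ε → L' ∈ A


section AuxRotation

variable {S : Type*} [MetricSpace S]

lemma supLog_nonneg (lam : ℝ → ℝ) : 0 ≤ supLog lam :=
  Real.sSup_nonneg fun x hx => by
    obtain ⟨s, t, _, _, _, rfl⟩ := hx; exact abs_nonneg _

lemma skorDist_nonneg (f g : ℝ → S) : 0 ≤ skorDist f g :=
  Real.sInf_nonneg fun x hx => by
    obtain ⟨lam, _, rfl⟩ := hx
    have h1 := supLog_nonneg lam
    have h2 : (0:ℝ) ≤ sSup {y | ∃ u ∈ Icc (0:ℝ) 1, y = dist (f (lam u)) (g u)} :=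
      Real.sSup_nonneg fun y hy => by obtain ⟨u, _, rfl⟩ := hy; exact dist_nonneg
    linarith

lemma loopDist_nonneg (l1 l2 : BasedLoop S) : 0 ≤ loopDist l1 l2 :=
  add_nonneg (abs_nonneg _) (skorDist_nonneg _ _)

lemma incBij_id : IncBij (fun x : ℝ => x) :=
  ⟨fun _ _ _ _ h => h, ⟨fun x hx => hx, fun _ _ _ _ h => h, fun x hx => ⟨x, hx, rfl⟩⟩, rfl, rfl⟩

lemma abs_log_mediant {a b c d : ℝ} (ha : 0 < a) (hb : 0 < b) (hc : 0 < c) (hd : 0 < d) :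
    |Real.log ((a + c) / (b + d))| ≤ max |Real.log (a / b)| |Real.log (c / d)| := by
  have hbd : 0 < b + d := by linarith
  rcases le_total (a / b) (c / d) with hle | hle
  · have hle' : a * d ≤ c * b := by rw [div_le_div_iff₀ hb hd] at hle; linarith
    have h1 : a / b ≤ (a + c) / (b + d) := by rw [div_le_div_iff₀ hb hbd]; nlinarith
    have h2 : (a + c) / (b + d) ≤ c / d := by rw [div_le_div_iff₀ hbd hd]; nlinarith
    exact abs_le_max_abs_abs (Real.log_le_log (by positivity) h1)
      (Real.log_le_log (by positivity) h2)
  · have hle' : c * b ≤ a * d := by rw [div_le_div_iff₀ hd hb] at hle; linarith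
    have h1 : c / d ≤ (a + c) / (b + d) := by rw [div_le_div_iff₀ hd hbd]; nlinarith
    have h2 : (a + c) / (b + d) ≤ a / b := by rw [div_le_div_iff₀ hbd hb]; nlinarith
    rw [max_comm]
    exact abs_le_max_abs_abs (Real.log_le_log (by positivity) h1)
      (Real.log_le_log (by positivity) h2)

/-- Rotation of a time-change `lam` around the point `c`. -/
noncomputable def rot (lam : ℝ → ℝ) (c : ℝ) : ℝ → ℝ := fun u =>
  if u ≤ 1 - c then lam (u + c) - lam c else lam (u + c - 1) + 1 - lam c

section RotProps

variable {lam : ℝ → ℝ} {c : ℝ} (hl : IncBij lam) (hc : c ∈ Icc (0:ℝ) 1)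
include hl hc

lemma rot_val1 {u : ℝ} (hu : u ∈ Icc 0 (1 - c)) : rot lam c u = lam (u + c) - lam c :=
  if_pos hu.2

lemma rot_val2 {u : ℝ} (hu : u ∈ Icc (1 - c) 1) :
    rot lam c u = lam (u + c - 1) + 1 - lam c := by
  rcases le_or_gt u (1 - c) with h | h
  · have hu1 : u = 1 - c := le_antisymm h hu.1
    have e1 : 1 - c + c = 1 := by ring
    have e2 : 1 - c + c - 1 = 0 := by ring
    rw [rot, if_pos h, hu1, e2, e1, hl.2.2.1, hl.2.2.2]
    norm_num
  · rw [rot, if_neg (not_le.mpr h)]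

lemma rot_strictMonoOn : StrictMonoOn (rot lam c) (Icc 0 1) := by
  have hmono := hl.1
  intro s hs t ht hst
  rcases le_or_gt t (1 - c) with h2 | h2
  · have h1 : s ≤ 1 - c := hst.le.trans h2
    rw [rot_val1 hl hc ⟨hs.1, h1⟩, rot_val1 hl hc ⟨ht.1, h2⟩]
    have := hmono (show s + c ∈ Icc (0:ℝ) 1 from ⟨by linarith [hc.1, hs.1], by linarith⟩)
      (show t + c ∈ Icc (0:ℝ) 1 from ⟨by linarith [hc.1, ht.1], by linarith⟩)
      (by linarith)
    linarith
  · rcases le_or_gt s (1 - c) with h1 | h1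
    · rw [rot_val1 hl hc ⟨hs.1, h1⟩, rot_val2 hl hc ⟨h2.le, ht.2⟩]
      have e1 : lam (s + c) ≤ lam 1 := by
        rcases eq_or_lt_of_le (show s + c ≤ 1 by linarith) with h | h
        · rw [h]
        · exact (hmono (show s + c ∈ Icc (0:ℝ) 1 from ⟨by linarith [hc.1, hs.1], by linarith⟩)
            (right_mem_Icc.mpr zero_le_one) h).le
      have e2 : lam 0 < lam (t + c - 1) :=
        hmono (left_mem_Icc.mpr zero_le_one)
          (show t + c - 1 ∈ Icc (0:ℝ) 1 from ⟨by linarith, by linarith [hc.2, ht.2]⟩)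
          (by linarith)
      rw [hl.2.2.1] at e2
      rw [hl.2.2.2] at e1
      linarith
    · rw [rot_val2 hl hc ⟨h1.le, hs.2⟩, rot_val2 hl hc ⟨h2.le, ht.2⟩]
      have := hmono (show s + c - 1 ∈ Icc (0:ℝ) 1 from ⟨by linarith, by linarith [hc.2, hs.2]⟩)
        (show t + c - 1 ∈ Icc (0:ℝ) 1 from ⟨by linarith, by linarith [hc.2, ht.2]⟩)
        (by linarith)
      linarith

lemma rot_zero : rot lam c 0 = 0 := by
  rw [rot_val1 hl hc ⟨le_refl 0, by linarith [hc.2]⟩, zero_add, sub_self]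

lemma rot_one : rot lam c 1 = 1 := by
  rw [rot_val2 hl hc ⟨by linarith [hc.1], le_refl 1⟩]
  have e : (1:ℝ) + c - 1 = c := by ring
  rw [e]; ring

lemma lam_mem {u : ℝ} (hu : u ∈ Icc (0:ℝ) 1) : lam u ∈ Icc (0:ℝ) 1 := hl.2.1.1 hu

lemma lam_monoOn {u v : ℝ} (hu : u ∈ Icc (0:ℝ) 1) (hv : v ∈ Icc (0:ℝ) 1) (huv : u ≤ v) :
    lam u ≤ lam v := hl.1.monotoneOn hu hv huv

lemma rot_incBij : IncBij (rot lam c) := by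
  refine ⟨rot_strictMonoOn hl hc, ⟨?_, (rot_strictMonoOn hl hc).injOn, ?_⟩,
    rot_zero hl hc, rot_one hl hc⟩
  · -- MapsTo
    intro u hu
    have hlc := lam_mem hl hc hc
    rcases le_or_gt u (1 - c) with h | h
    · rw [rot_val1 hl hc ⟨hu.1, h⟩]
      have m1 : lam c ≤ lam (u + c) := lam_monoOn hl hc hc
        ⟨by linarith [hu.1, hc.1], by linarith⟩ (by linarith [hu.1])
      have m2 : lam (u + c) ≤ lam 1 := lam_monoOn hl hc
        ⟨by linarith [hu.1, hc.1], by linarith⟩ (right_mem_Icc.mpr zero_le_one) (by linarith)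
      rw [hl.2.2.2] at m2
      exact ⟨by linarith, by linarith [hlc.1]⟩
    · rw [rot_val2 hl hc ⟨h.le, hu.2⟩]
      have m1 : lam 0 ≤ lam (u + c - 1) := lam_monoOn hl hc (left_mem_Icc.mpr zero_le_one)
        ⟨by linarith, by linarith [hu.2, hc.2]⟩ (by linarith)
      have m2 : lam (u + c - 1) ≤ lam c := lam_monoOn hl hc
        ⟨by linarith, by linarith [hu.2, hc.2]⟩ hc (by linarith [hu.2])
      rw [hl.2.2.1] at m1
      exact ⟨by linarith [hlc.2], by linarith⟩
  · -- SurjOn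
    intro y hy
    have hlc := lam_mem hl hc hc
    rcases le_or_gt y (1 - lam c) with h | h
    · obtain ⟨v, hv, hlv⟩ := hl.2.1.2.2 (show y + lam c ∈ Icc (0:ℝ) 1 from
        ⟨by linarith [hy.1, hlc.1], by linarith⟩)
      have hvc : c ≤ v := by
        by_contra hcon
        push_neg at hcon
        have := hl.1 hv hc hcon
        rw [hlv] at this
        linarith [hy.1]
      refine ⟨v - c, ⟨by linarith, by linarith [hv.2, hc.1]⟩, ?_⟩
      rw [rot_val1 hl hc ⟨by linarith, by linarith [hv.2]⟩]
      have e : v - c + c = v := by ring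
      rw [e, hlv]; ring
    · obtain ⟨v, hv, hlv⟩ := hl.2.1.2.2 (show y - 1 + lam c ∈ Icc (0:ℝ) 1 from
        ⟨by linarith, by linarith [hy.2, hlc.2]⟩)
      have hvc : v ≤ c := by
        by_contra hcon
        push_neg at hcon
        have := hl.1 hc hv hcon
        rw [hlv] at this
        linarith [hy.2]
      refine ⟨v + 1 - c, ⟨by linarith [hv.1, hc.2], by linarith⟩, ?_⟩
      rw [rot_val2 hl hc ⟨by linarith [hv.1], by linarith⟩]
      have e : v + 1 - c + c - 1 = v := by ring
      rw [e, hlv]; ring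

lemma rot_supLog : supLog (rot lam c) = supLog lam := by
  have hmono := hl.1
  have hincr : ∀ s t : ℝ, 0 ≤ s → s < t → t ≤ 1 → 0 < lam t - lam s := by
    intro s t hs hst ht
    have := hmono ⟨hs, by linarith⟩ ⟨by linarith, ht⟩ hst
    linarith
  have hmem : ∀ s t : ℝ, 0 ≤ s → s < t → t ≤ 1 →
      |Real.log ((lam t - lam s) / (t - s))| ∈
        {x | ∃ s t : ℝ, 0 ≤ s ∧ s < t ∧ t ≤ 1 ∧ x = |Real.log ((lam t - lam s) / (t - s))|} :=
    fun s t hs hst ht => ⟨s, t, hs, hst, ht, rfl⟩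
  apply csSup_eq_csSup_of_forall_exists_le
  · -- every element for (rot lam c) bounded by an element for lam
    rintro x ⟨s, t, hs, hst, ht, rfl⟩
    rcases le_or_gt t (1 - c) with h2 | h2
    · refine ⟨_, hmem (s + c) (t + c) (by linarith [hc.1]) (by linarith) (by linarith), le_of_eq ?_⟩
      rw [rot_val1 hl hc ⟨hs, hst.le.trans h2⟩, rot_val1 hl hc ⟨by linarith, h2⟩]
      have e1 : lam (t + c) - lam c - (lam (s + c) - lam c) = lam (t + c) - lam (s + c) := by
        ring
      have e2 : t + c - (s + c) = t - s := by ring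
      rw [e1, e2]
    · rcases le_or_gt s (1 - c) with h1 | h1
      · rcases eq_or_lt_of_le h1 with heq | hlt
        · -- s = 1 - c : single piece
          refine ⟨_, hmem 0 (t + c - 1) le_rfl (by linarith) (by linarith [hc.2]), le_of_eq ?_⟩
          rw [rot_val1 hl hc ⟨hs, h1⟩, rot_val2 hl hc ⟨h2.le, ht⟩]
          subst heq
          have e0 : 1 - c + c = 1 := by ring
          rw [e0, hl.2.2.2, hl.2.2.1]
          have e1 : lam (t + c - 1) + 1 - lam c - (1 - lam c) = lam (t + c - 1) - 0 := by ring
          have e2 : t + c - 1 - 0 = t - (1 - c) := by ring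
          rw [e1, ← e2]
        · -- genuine crossing
          have key : rot lam c t - rot lam c s =
              (lam (t + c - 1) - lam 0) + (lam 1 - lam (s + c)) := by
            rw [rot_val1 hl hc ⟨hs, h1⟩, rot_val2 hl hc ⟨h2.le, ht⟩, hl.2.2.2, hl.2.2.1]
            ring
          have hb : (0:ℝ) < t + c - 1 - 0 := by linarith
          have hd : (0:ℝ) < 1 - (s + c) := by linarith
          have ha : 0 < lam (t + c - 1) - lam 0 := hincr 0 (t + c - 1) le_rfl (by linarith)
            (by linarith [hc.2])
          have hcc : 0 < lam 1 - lam (s + c) := hincr (s + c) 1 (by linarith [hc.1])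
            (by linarith) le_rfl
          have hts : t - s = (t + c - 1 - 0) + (1 - (s + c)) := by ring
          have med := abs_log_mediant ha hb hcc hd
          rw [key, hts]
          rcases le_total |Real.log ((lam (t + c - 1) - lam 0) / (t + c - 1 - 0))|
              |Real.log ((lam 1 - lam (s + c)) / (1 - (s + c)))| with hm | hm
          · exact ⟨_, hmem (s + c) 1 (by linarith [hc.1]) (by linarith) le_rfl,
              med.trans (by rw [max_eq_right hm])⟩
          · exact ⟨_, hmem 0 (t + c - 1) le_rfl (by linarith) (by linarith [hc.2]),
              med.trans (by rw [max_eq_left hm])⟩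
      · refine ⟨_, hmem (s + c - 1) (t + c - 1) (by linarith) (by linarith)
          (by linarith [hc.2]), le_of_eq ?_⟩
        rw [rot_val2 hl hc ⟨h1.le, hst.le.trans ht⟩, rot_val2 hl hc ⟨h2.le, ht⟩]
        have e1 : lam (t + c - 1) + 1 - lam c - (lam (s + c - 1) + 1 - lam c) =
            lam (t + c - 1) - lam (s + c - 1) := by ring
        have e2 : t + c - 1 - (s + c - 1) = t - s := by ring
        rw [e1, e2]
  · -- every element for lam bounded by an element for (rot lam c)
    have hmem' : ∀ s t : ℝ, 0 ≤ s → s < t → t ≤ 1 →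
        |Real.log ((rot lam c t - rot lam c s) / (t - s))| ∈
          {x | ∃ s t : ℝ, 0 ≤ s ∧ s < t ∧ t ≤ 1 ∧
            x = |Real.log ((rot lam c t - rot lam c s) / (t - s))|} :=
      fun s t hs hst ht => ⟨s, t, hs, hst, ht, rfl⟩
    rintro x ⟨s, t, hs, hst, ht, rfl⟩
    rcases le_or_gt t c with h2 | h2
    · refine ⟨_, hmem' (s + 1 - c) (t + 1 - c) (by linarith [hc.2]) (by linarith)
        (by linarith), le_of_eq ?_⟩
      rw [rot_val2 hl hc ⟨by linarith, by linarith⟩, rot_val2 hl hc ⟨by linarith, by linarith⟩]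
      have e1 : s + 1 - c + c - 1 = s := by ring
      have e2 : t + 1 - c + c - 1 = t := by ring
      rw [e1, e2]
      have e3 : lam t + 1 - lam c - (lam s + 1 - lam c) = lam t - lam s := by ring
      have e4 : t + 1 - c - (s + 1 - c) = t - s := by ring
      rw [e3, ← e4]
    · rcases le_or_gt c s with h1 | h1
      · refine ⟨_, hmem' (s - c) (t - c) (by linarith) (by linarith)
          (by linarith [hc.1]), le_of_eq ?_⟩
        rw [rot_val1 hl hc ⟨by linarith, by linarith⟩, rot_val1 hl hc ⟨by linarith, by linarith⟩]
        have e1 : s - c + c = s := by ring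
        have e2 : t - c + c = t := by ring
        rw [e1, e2]
        have e3 : lam t - lam c - (lam s - lam c) = lam t - lam s := by ring
        have e4 : t - c - (s - c) = t - s := by ring
        rw [e3, ← e4]
      · -- genuine crossing : s < c < t
        have v1 : rot lam c (t - c) = lam t - lam c := by
          have e : t - c + c = t := by ring
          rw [rot_val1 hl hc ⟨by linarith, by linarith⟩, e]
        have v2 : rot lam c (s + 1 - c) = lam s + 1 - lam c := by
          rw [rot_val2 hl hc ⟨by linarith, by linarith⟩]
          have e : s + 1 - c + c - 1 = s := by ring
          rw [e]
        have v0 : rot lam c 0 = 0 := rot_zero hl hc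
        have vI : rot lam c 1 = 1 := rot_one hl hc
        have key : lam t - lam s = (rot lam c (t - c) - rot lam c 0) +
            (rot lam c 1 - rot lam c (s + 1 - c)) := by
          rw [v1, v2, v0, vI]; ring
        have hb : (0:ℝ) < t - c - 0 := by linarith
        have hd : (0:ℝ) < 1 - (s + 1 - c) := by linarith
        have ha : 0 < rot lam c (t - c) - rot lam c 0 := by
          have := rot_strictMonoOn hl hc (left_mem_Icc.mpr zero_le_one)
            (show t - c ∈ Icc (0:ℝ) 1 from ⟨by linarith, by linarith [hc.1]⟩) (by linarith)
          linarith
        have hcc : 0 < rot lam c 1 - rot lam c (s + 1 - c) := by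
          have := rot_strictMonoOn hl hc
            (show s + 1 - c ∈ Icc (0:ℝ) 1 from ⟨by linarith [hc.2], by linarith⟩)
            (right_mem_Icc.mpr zero_le_one) (by linarith)
          linarith
        have hts : t - s = (t - c - 0) + (1 - (s + 1 - c)) := by ring
        have med := abs_log_mediant ha hb hcc hd
        rw [key, hts]
        rcases le_total |Real.log ((rot lam c (t - c) - rot lam c 0) / (t - c - 0))|
            |Real.log ((rot lam c 1 - rot lam c (s + 1 - c)) / (1 - (s + 1 - c)))| with hm | hm
        · exact ⟨_, hmem' (s + 1 - c) 1 (by linarith [hc.2]) (by linarith) le_rfl,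
            med.trans (by rw [max_eq_right hm])⟩
        · exact ⟨_, hmem' 0 (t - c) le_rfl (by linarith) (by linarith [hc.1]),
            med.trans (by rw [max_eq_left hm])⟩

lemma rot_distSup (F G F' G' : ℝ → S)
    (hF : ∀ w, F (w + 1) = F w) (hG : ∀ w, G (w + 1) = G w)
    (hF' : ∀ w, F' w = F (w + lam c)) (hG' : ∀ u, G' u = G (u + c)) :
    sSup {y | ∃ u ∈ Icc (0:ℝ) 1, y = dist (F' (rot lam c u)) (G' u)} =
      sSup {y | ∃ u ∈ Icc (0:ℝ) 1, y = dist (F (lam u)) (G u)} := by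
  apply csSup_eq_csSup_of_forall_exists_le
  · rintro x ⟨u, hu, rfl⟩
    rcases le_or_gt u (1 - c) with h | h
    · refine ⟨_, ⟨u + c, ⟨by linarith [hu.1, hc.1], by linarith⟩, rfl⟩, le_of_eq ?_⟩
      rw [rot_val1 hl hc ⟨hu.1, h⟩, hF', hG']
      have e : lam (u + c) - lam c + lam c = lam (u + c) := by ring
      rw [e]
    · refine ⟨_, ⟨u + c - 1, ⟨by linarith, by linarith [hu.2, hc.2]⟩, rfl⟩, le_of_eq ?_⟩
      rw [rot_val2 hl hc ⟨h.le, hu.2⟩, hF', hG']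
      have e : lam (u + c - 1) + 1 - lam c + lam c = lam (u + c - 1) + 1 := by ring
      have hGG : G (u + c) = G (u + c - 1) := by
        rw [← hG (u + c - 1)]
        congr 1
        ring
      rw [e, hF, hGG]
  · rintro x ⟨v, hv, rfl⟩
    rcases le_or_gt c v with h | h
    · refine ⟨_, ⟨v - c, ⟨by linarith, by linarith [hv.2, hc.1]⟩, rfl⟩, le_of_eq ?_⟩
      rw [rot_val1 hl hc ⟨by linarith, by linarith [hv.2]⟩, hF', hG']
      have e1 : v - c + c = v := by ring
      rw [e1]
      have e2 : lam v - lam c + lam c = lam v := by ring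
      rw [e2]
    · rcases eq_or_lt_of_le hv.1 with hv0 | hv0
      · -- v = 0 < c : use u = 1 - c
        refine ⟨_, ⟨1 - c, ⟨by linarith [hc.2], by linarith [hc.1]⟩, rfl⟩, le_of_eq ?_⟩
        rw [rot_val1 hl hc ⟨by linarith [hc.2], le_refl _⟩, hF', hG']
        have e1 : 1 - c + c = 1 := by ring
        rw [e1, hl.2.2.2, ← hv0, hl.2.2.1]
        have e2 : (1:ℝ) - lam c + lam c = 0 + 1 := by ring
        rw [e2, hF]
        have e3 : (1:ℝ) = 0 + 1 := by ring
        rw [e3, hG]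
      · refine ⟨_, ⟨v + 1 - c, ⟨by linarith [hc.2], by linarith⟩, rfl⟩, le_of_eq ?_⟩
        rw [rot_val2 hl hc ⟨by linarith, by linarith⟩, hF', hG']
        have e1 : v + 1 - c + c - 1 = v := by ring
        have e2 : v + 1 - c + c = v + 1 := by ring
        rw [e1, e2, hG]
        have e3 : lam v + 1 - lam c + lam c = lam v + 1 := by ring
        rw [e3, hF]

end RotProps

lemma basedLoop_ext {a b : BasedLoop S} (hf : a.f = b.f) (hl : a.len = b.len) : a = b := by
  cases a; cases b
  cases hf; cases hl
  rfl

lemma normalized_periodic (h : BasedLoop S) (w : ℝ) :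
    h.normalized (w + 1) = h.normalized w := by
  unfold BasedLoop.normalized
  rw [mul_add, mul_one, h.periodic]

/-- Key step: shifting the first loop can only decrease the distance to the class,
up to `ε`, by rotating the time change. -/
lemma key_step (h l : BasedLoop S) (r : ℝ) (hr : r ∈ Ico 0 h.len) {ε : ℝ} (hε : 0 < ε) :
    ∃ l' : BasedLoop S, LoopEquiv l' l ∧ loopDist (h.shift r) l' ≤ loopDist h l + ε := by
  have hne : {x | ∃ lam, IncBij lam ∧ x = supLog lam +
      sSup {y | ∃ u ∈ Icc (0:ℝ) 1, y = dist (h.normalized (lam u)) (l.normalized u)}}.Nonempty :=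
    ⟨_, (fun x : ℝ => x), incBij_id, rfl⟩
  obtain ⟨x, hxmem, hxlt⟩ := Real.lt_sInf_add_pos hne hε
  obtain ⟨lam, hlam, rfl⟩ := hxmem
  have hlen := h.len_pos
  set ρ : ℝ := r / h.len with hρdef
  have hρ : ρ ∈ Icc (0:ℝ) 1 :=
    ⟨div_nonneg hr.1 hlen.le, le_of_lt (by rw [div_lt_one hlen]; exact hr.2)⟩
  obtain ⟨c, hc, hlamc⟩ := hlam.2.1.2.2 hρ
  refine ⟨l.shift (l.len * c), ⟨rfl, -(l.len * c), fun u => by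
    show l.f (u + -(l.len * c) + l.len * c) = l.f u
    congr 1; ring⟩, ?_⟩
  have hF' : ∀ w, (h.shift r).normalized w = h.normalized (w + lam c) := by
    intro w
    show h.f (h.len * w + r) = h.f (h.len * (w + lam c))
    rw [hlamc]
    congr 1
    rw [mul_add]
    congr 1
    rw [hρdef, mul_div_cancel₀ _ (ne_of_gt hlen)]
  have hG' : ∀ u, (l.shift (l.len * c)).normalized u = l.normalized (u + c) := by
    intro u
    show l.f (l.len * u + l.len * c) = l.f (l.len * (u + c))
    congr 1; ring
  have hbdd : BddBelow {x | ∃ lam', IncBij lam' ∧ x = supLog lam' +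
      sSup {y | ∃ u ∈ Icc (0:ℝ) 1,
        y = dist ((h.shift r).normalized (lam' u)) ((l.shift (l.len * c)).normalized u)}} := by
    refine ⟨0, ?_⟩
    rintro z ⟨lam', _, rfl⟩
    have h1 := supLog_nonneg lam'
    have h2 : (0:ℝ) ≤ sSup {y | ∃ u ∈ Icc (0:ℝ) 1,
        y = dist ((h.shift r).normalized (lam' u)) ((l.shift (l.len * c)).normalized u)} :=
      Real.sSup_nonneg fun y hy => by obtain ⟨u, _, rfl⟩ := hy; exact dist_nonneg
    linarith
  have hskor : skorDist (h.shift r).normalized (l.shift (l.len * c)).normalized ≤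
      supLog lam + sSup {y | ∃ u ∈ Icc (0:ℝ) 1,
        y = dist (h.normalized (lam u)) (l.normalized u)} := by
    have hmem2 : supLog (rot lam c) + sSup {y | ∃ u ∈ Icc (0:ℝ) 1,
        y = dist ((h.shift r).normalized (rot lam c u))
          ((l.shift (l.len * c)).normalized u)} ∈
        {x | ∃ lam', IncBij lam' ∧ x = supLog lam' +
          sSup {y | ∃ u ∈ Icc (0:ℝ) 1,
            y = dist ((h.shift r).normalized (lam' u)) ((l.shift (l.len * c)).normalized u)}} :=
      ⟨rot lam c, rot_incBij hlam hc, rfl⟩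
    have := csInf_le hbdd hmem2
    rw [rot_supLog hlam hc, rot_distSup hlam hc h.normalized l.normalized
      (h.shift r).normalized (l.shift (l.len * c)).normalized
      (normalized_periodic h) (normalized_periodic l) hF' hG'] at this
    exact this
  have hlen_eq : (h.shift r).len = h.len := rfl
  have hlen_eq2 : (l.shift (l.len * c)).len = l.len := rfl
  have hxlt' : supLog lam + sSup {y | ∃ u ∈ Icc (0:ℝ) 1,
      y = dist (h.normalized (lam u)) (l.normalized u)} <
      skorDist h.normalized l.normalized + ε := hxlt
  calc loopDist (h.shift r) (l.shift (l.len * c))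
      = |h.len - l.len| + skorDist (h.shift r).normalized (l.shift (l.len * c)).normalized := rfl
    _ ≤ |h.len - l.len| + (supLog lam + sSup {y | ∃ u ∈ Icc (0:ℝ) 1,
        y = dist (h.normalized (lam u)) (l.normalized u)}) := by linarith
    _ ≤ |h.len - l.len| + (skorDist h.normalized l.normalized + ε) := by linarith [hxlt']
    _ = loopDist h l + ε := by rw [loopDist]; ring

lemma sInf_shift_le (h l2 : BasedLoop S) (r : ℝ) (hr : r ∈ Ico 0 h.len) :
    sInf {x | ∃ l : BasedLoop S, (loopSetoid S).r l l2 ∧ x = loopDist (h.shift r) l} ≤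
      sInf {x | ∃ l : BasedLoop S, (loopSetoid S).r l l2 ∧ x = loopDist h l} := by
  set A := {x | ∃ l : BasedLoop S, (loopSetoid S).r l l2 ∧ x = loopDist h l}
  set B := {x | ∃ l : BasedLoop S, (loopSetoid S).r l l2 ∧ x = loopDist (h.shift r) l}
  have hAne : A.Nonempty := ⟨loopDist h l2, l2, Setoid.refl l2, rfl⟩
  have hBbdd : BddBelow B := by
    refine ⟨0, ?_⟩
    rintro z ⟨l, _, rfl⟩
    exact loopDist_nonneg _ _
  apply le_of_forall_pos_le_add
  intro ε hε
  obtain ⟨x, hxA, hxlt⟩ := Real.lt_sInf_add_pos hAne (half_pos hε)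
  obtain ⟨l, hll2, rfl⟩ := hxA
  obtain ⟨l', hl'l, hl'⟩ := key_step h l r hr (half_pos hε)
  have hl'l2 : (loopSetoid S).r l' l2 := Setoid.trans hl'l hll2
  have hmem : loopDist (h.shift r) l' ∈ B := ⟨l', hl'l2, rfl⟩
  have := csInf_le hBbdd hmem
  linarith

end AuxRotation

/-- If the periodic extension of `l₁` is continuous at `r ∈ [0, |l₁|)`, then
`inf { D(l₁, l) : l ∈ l₂ᵒ } = inf { D(Θ_r l₁, l) : l ∈ l₂ᵒ }`. -/
theorem infDist_shift_invariant (l1 l2 : BasedLoop S) (r : ℝ) (hr : r ∈ Ico 0 l1.len)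
    (hcont : Tendsto l1.f (𝓝[<] r) (𝓝 (l1.f r))) :
    sInf {x | ∃ l : BasedLoop S, (loopSetoid S).r l l2 ∧ x = loopDist l1 l} =
      sInf {x | ∃ l : BasedLoop S, (loopSetoid S).r l l2 ∧ x = loopDist (l1.shift r) l} := by
  rcases eq_or_lt_of_le hr.1 with h0 | h0
  · -- r = 0
    have : l1.shift r = l1 := by
      apply basedLoop_ext
      · funext u
        show l1.f (u + r) = l1.f u
        rw [← h0, add_zero]
      · rfl
    rw [this]
  · -- r > 0
    apply le_antisymm
    · have heq : (l1.shift r).shift (l1.len - r) = l1 := by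
        apply basedLoop_ext
        · funext u
          show l1.f (u + (l1.len - r) + r) = l1.f u
          have e : u + (l1.len - r) + r = u + l1.len := by ring
          rw [e, l1.periodic]
        · rfl
      have := sInf_shift_le (l1.shift r) l2 (l1.len - r)
        ⟨by linarith [hr.2], by
          show l1.len - r < l1.len
          linarith⟩
      rw [heq] at this
      exact this
    · exact sInf_shift_le l1 l2 r hr
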